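/- Let λ = (√2/2)(1 + i) and c = i/(√2 (1 + i)). Then for every ψ ∈ 𝓢(ℝ,ℂ) and every x₀ ∈ ℝ: ∫_ℝ conj(c) e^{-conj(λ) |x - x₀|} ( x ψ(x) - i (d²/dx²)(x ψ(x)) ) dx = x₀ · ψ(x₀). (This expresses the eigenvalue equation q̂ η_{x₀} = x₀ η_{x₀} for the eigenfunction η_{x₀}(x) = c e^{-λ|x-x₀|} of the deformed position operator q̂ = T q̂₀ T⁻¹: pairing η_{x₀} with q̂† φ = (T⁻¹)†(q̂₀(T† φ)) and substituting ψ = T† φ yields exactly this identity.) -/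

import Mathlib

open MeasureTheory Filter Complex Set

private lemma schwartz_top (h : SchwartzMap ℝ ℂ) : Tendsto h atTop (nhds 0) :=
  (zero_at_infty h).mono_left atTop_le_cocompact

private lemma schwartz_bot (h : SchwartzMap ℝ ℂ) : Tendsto h atBot (nhds 0) :=
  (zero_at_infty h).mono_left atBot_le_cocompact

private lemma exp_int (μ : ℂ) (hre : 0 ≤ μ.re) (a : ℝ) (h : SchwartzMap ℝ ℂ) :
    Integrable (fun x : ℝ => Complex.exp (-μ * ((|x - a| : ℝ) : ℂ)) * h x) := by
  apply h.integrable.bdd_mul (c := 1)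
  · refine (Complex.continuous_exp.comp ?_).aestronglyMeasurable
    exact (continuous_const.mul (Complex.continuous_ofReal.comp
      ((continuous_id.sub continuous_const).abs)))
  · refine Filter.Eventually.of_forall (fun x => ?_)
    rw [Complex.norm_exp, Real.exp_le_one_iff]
    have : (-μ * ((|x - a| : ℝ) : ℂ)).re = -μ.re * |x - a| := by simp [Complex.mul_re]
    rw [this]
    have := abs_nonneg (x - a)
    nlinarith

private lemma hasDeriv_expr (μ : ℂ) (a : ℝ) (x : ℝ) :
    HasDerivAt (fun x : ℝ => Complex.exp (-μ * ((x : ℂ) - (a : ℂ))))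
      (-μ * Complex.exp (-μ * ((x : ℂ) - (a : ℂ)))) x := by
  have h1 : HasDerivAt (fun x : ℝ => ((x : ℂ))) 1 x := Complex.ofRealCLM.hasDerivAt
  have h2 := ((h1.sub_const (a : ℂ)).const_mul (-μ)).cexp
  simpa [mul_comm] using h2

private lemma schwartz_hasDeriv (h : SchwartzMap ℝ ℂ) (x : ℝ) :
    HasDerivAt h (SchwartzMap.derivCLM ℝ ℂ h x) x := by
  rw [SchwartzMap.derivCLM_apply]
  exact (h.differentiable x).hasDerivAt

private lemma aux_key (μ : ℂ) (hre : 0 ≤ μ.re) (Φ : SchwartzMap ℝ ℂ) (a : ℝ) :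
    ∫ x : ℝ, Complex.exp (-μ * ((|x - a| : ℝ) : ℂ)) *
        (SchwartzMap.derivCLM ℝ ℂ (SchwartzMap.derivCLM ℝ ℂ Φ) x - μ ^ 2 * Φ x)
      = -2 * μ * Φ a := by
  set g1 := SchwartzMap.derivCLM ℝ ℂ Φ with hg1
  set g2 := SchwartzMap.derivCLM ℝ ℂ g1 with hg2
  set k : ℝ → ℂ := fun x => Complex.exp (-μ * ((|x - a| : ℝ) : ℂ)) * (g2 x - μ ^ 2 * Φ x)
    with hk
  have hint : Integrable k := by
    have := exp_int μ hre a (g2 - μ ^ 2 • Φ)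
    refine this.congr (Filter.Eventually.of_forall fun x => ?_)
    simp [hk, SchwartzMap.sub_apply, SchwartzMap.smul_apply, smul_eq_mul]
  -- right half
  have h2 : ∫ x in Ioi a, k x = -(g1 a + μ * Φ a) := by
    set F : ℝ → ℂ := fun x => Complex.exp (-μ * ((x : ℂ) - a)) * (g1 x + μ * Φ x) with hF
    have hFd : ∀ x : ℝ, HasDerivAt F
        (Complex.exp (-μ * ((x : ℂ) - a)) * (g2 x - μ ^ 2 * Φ x)) x := by
      intro x
      have := (hasDeriv_expr μ a x).mul
        ((schwartz_hasDeriv g1 x).add ((schwartz_hasDeriv Φ x).const_mul μ))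
      refine this.congr_deriv ?_
      rw [hg2, ← hg1]; simp only [Pi.add_apply, Pi.sub_apply]; ring
    have heq : EqOn k (fun x : ℝ => Complex.exp (-μ * ((x : ℂ) - (a : ℂ))) *
        (g2 x - μ ^ 2 * Φ x)) (Ioi a) := by
      intro x hx
      have hxa : |x - a| = x - a := abs_of_pos (by simpa using hx)
      simp only [hk, hxa]
      push_cast
      ring_nf
    have hFint : IntegrableOn (fun x : ℝ => Complex.exp (-μ * ((x : ℂ) - (a : ℂ))) *
        (g2 x - μ ^ 2 * Φ x)) (Ioi a) := (hint.integrableOn).congr_fun heq measurableSet_Ioi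
    have hFtend : Tendsto F atTop (nhds 0) := by
      apply squeeze_zero_norm' (a := fun x => ‖g1 x + μ * Φ x‖)
      · filter_upwards [eventually_ge_atTop a] with x hx
        rw [hF]
        simp only [norm_mul]
        have h1 : ‖Complex.exp (-μ * ((x : ℂ) - a))‖ ≤ 1 := by
          rw [Complex.norm_exp, Real.exp_le_one_iff]
          have : (-μ * ((x : ℂ) - a)).re = -μ.re * (x - a) := by
            simp [Complex.mul_re, Complex.sub_re, Complex.ofReal_re, Complex.sub_im]
          rw [this]; nlinarith
        calc ‖Complex.exp (-μ * ((x : ℂ) - a))‖ * ‖g1 x + μ * Φ x‖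
            ≤ 1 * ‖g1 x + μ * Φ x‖ := by gcongr
          _ = ‖g1 x + μ * Φ x‖ := one_mul _
      · have h0 : Tendsto (fun x => g1 x + μ * Φ x) atTop (nhds 0) := by
          have := (schwartz_top g1).add (Tendsto.const_mul μ (schwartz_top Φ))
          simpa using this
        simpa using h0.norm
    have hI := integral_Ioi_of_hasDerivAt_of_tendsto' (fun x _ => hFd x) hFint hFtend
    rw [setIntegral_congr_fun measurableSet_Ioi heq, hI]
    simp [hF]
  -- left half
  have h1 : ∫ x in Iic a, k x = g1 a - μ * Φ a := by
    set G : ℝ → ℂ := fun x => Complex.exp (μ * ((x : ℂ) - a)) * (g1 x - μ * Φ x) with hG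
    have hGd : ∀ x : ℝ, HasDerivAt G
        (Complex.exp (μ * ((x : ℂ) - a)) * (g2 x - μ ^ 2 * Φ x)) x := by
      intro x
      have he := hasDeriv_expr (-μ) a x
      simp only [neg_neg] at he
      have := he.mul ((schwartz_hasDeriv g1 x).sub ((schwartz_hasDeriv Φ x).const_mul μ))
      refine this.congr_deriv ?_
      rw [hg2, ← hg1]; simp only [Pi.add_apply, Pi.sub_apply]; ring
    have heq : EqOn k (fun x : ℝ => Complex.exp (μ * ((x : ℂ) - (a : ℂ))) *
        (g2 x - μ ^ 2 * Φ x)) (Iic a) := by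
      intro x hx
      have hxa : |x - a| = -(x - a) := abs_of_nonpos (by simpa using hx)
      simp only [hk, hxa]
      push_cast
      ring_nf
    have hGint : IntegrableOn (fun x : ℝ => Complex.exp (μ * ((x : ℂ) - (a : ℂ))) *
        (g2 x - μ ^ 2 * Φ x)) (Iic a) := (hint.integrableOn).congr_fun heq measurableSet_Iic
    have hGtend : Tendsto G atBot (nhds 0) := by
      apply squeeze_zero_norm' (a := fun x => ‖g1 x - μ * Φ x‖)
      · filter_upwards [eventually_le_atBot a] with x hx
        rw [hG]
        simp only [norm_mul]
        have h1 : ‖Complex.exp (μ * ((x : ℂ) - a))‖ ≤ 1 := by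
          rw [Complex.norm_exp, Real.exp_le_one_iff]
          have : (μ * ((x : ℂ) - a)).re = μ.re * (x - a) := by
            simp [Complex.mul_re, Complex.sub_re, Complex.ofReal_re, Complex.sub_im]
          rw [this]; nlinarith
        calc ‖Complex.exp (μ * ((x : ℂ) - a))‖ * ‖g1 x - μ * Φ x‖
            ≤ 1 * ‖g1 x - μ * Φ x‖ := by gcongr
          _ = ‖g1 x - μ * Φ x‖ := one_mul _
      · have h0 : Tendsto (fun x => g1 x - μ * Φ x) atBot (nhds 0) := by
          have := (schwartz_bot g1).sub (Tendsto.const_mul μ (schwartz_bot Φ))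
          simpa using this
        simpa using h0.norm
    have hI := integral_Iic_of_hasDerivAt_of_tendsto' (fun x _ => hGd x) hGint hGtend
    rw [setIntegral_congr_fun measurableSet_Iic heq, hI]
    simp [hG]
  have hsplit := integral_add_compl (measurableSet_Iic (a := a)) hint
  rw [compl_Iic] at hsplit
  rw [← hsplit, h1, h2]
  ring

/-- `x ↦ x * ψ x` as a Schwartz map. -/
private noncomputable def Phi (ψ : SchwartzMap ℝ ℂ) : SchwartzMap ℝ ℂ :=
  SchwartzMap.bilinLeftCLM (ContinuousLinearMap.mul ℝ ℂ)
    Complex.ofRealCLM.hasTemperateGrowth ψ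

/-- Eigenvalue equation `q̂ η_{x₀} = x₀ η_{x₀}` in the second example, tested against
`ψ = T† φ`: with `λ = (√2/2)(1+i)`, `c = i/(√2(1+i))`, and `η_{x₀}(x) = c e^{-λ|x-x₀|}`,
one has `∫ conj(c) e^{-conj(λ)|x-x₀|} (x ψ(x) - i (x ψ(x))'') dx = x₀ ψ(x₀)`. -/
theorem statement19 (l c : ℂ)
    (hl : l = (Real.sqrt 2 / 2 : ℝ) * (1 + Complex.I))
    (hc : c = Complex.I / ((Real.sqrt 2 : ℝ) * (1 + Complex.I))) :
    ∀ (ψ : SchwartzMap ℝ ℂ) (x₀ : ℝ),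
      ∫ x : ℝ, (starRingEnd ℂ) c * Complex.exp (-(starRingEnd ℂ) l * ((|x - x₀| : ℝ) : ℂ))
          * ((x : ℂ) * ψ x
              - Complex.I * deriv (deriv (fun t : ℝ => (t : ℂ) * ψ t)) x)
        = (x₀ : ℂ) * ψ x₀ := by
  intro ψ a
  set μ : ℂ := (starRingEnd ℂ) l with hμdef
  set Φ : SchwartzMap ℝ ℂ := Phi ψ with hΦdef
  set g1 := SchwartzMap.derivCLM ℝ ℂ Φ with hg1
  set g2 := SchwartzMap.derivCLM ℝ ℂ g1 with hg2
  -- algebraic facts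
  have hμ : μ = (((2:ℝ).sqrt : ℂ)/2) * (1 - Complex.I) := by
    rw [hμdef, hl]
    push_cast
    simp only [map_mul, map_div₀, map_add, Complex.conj_I, Complex.conj_ofReal, map_one,
      map_ofNat]
    ring
  have hre : 0 ≤ μ.re := by
    rw [hμdef, Complex.conj_re, hl]
    simp [Complex.mul_re]
    positivity
  have ht2 : ((2:ℝ).sqrt : ℂ)^2 = 2 := by
    norm_cast
    rw [Real.sq_sqrt]; norm_num
  have hμ2 : μ ^ 2 = -Complex.I := by
    rw [hμ]
    linear_combination ((1 - Complex.I)^2/4) * ht2 + (1/2) * Complex.I_sq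
  have hcc : (starRingEnd ℂ) c * (2 * Complex.I * μ) = 1 := by
    have ht0 : ((2:ℝ).sqrt : ℂ) ≠ 0 := by
      simp only [ne_eq, Complex.ofReal_eq_zero]
      positivity
    have h1I : (1:ℂ) - Complex.I ≠ 0 := by
      intro h
      have := congrArg Complex.im h
      simp at this
    rw [hc, hμ]
    simp only [map_div₀, map_mul, Complex.conj_I, map_add, Complex.conj_ofReal, map_one]
    rw [div_mul_eq_mul_div, ← sub_eq_add_neg, div_eq_one_iff_eq (mul_ne_zero ht0 h1I)]
    linear_combination (-(((2:ℝ).sqrt : ℂ) * (1 - Complex.I))) * Complex.I_sq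
  -- rewrite the integrand in terms of Φ and g2
  have hfun : (fun t : ℝ => (t : ℂ) * ψ t) = ⇑Φ := funext fun t => mul_comm _ _
  have hd1 : deriv ⇑Φ = ⇑g1 := funext fun x => (SchwartzMap.derivCLM_apply (𝕜 := ℝ) Φ x).symm
  have hd2 : deriv (deriv ⇑Φ) = ⇑g2 := by
    rw [hd1]
    exact funext fun x => (SchwartzMap.derivCLM_apply (𝕜 := ℝ) g1 x).symm
  rw [hfun]
  simp only [hd2]
  -- integrability
  have I0 : Integrable (fun x : ℝ => Complex.exp (-μ * ((|x - a| : ℝ) : ℂ)) * Φ x) :=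
    exp_int μ hre a Φ
  have I2 : Integrable (fun x : ℝ => Complex.exp (-μ * ((|x - a| : ℝ) : ℂ)) * g2 x) :=
    exp_int μ hre a g2
  set E0 : ℂ := ∫ x : ℝ, Complex.exp (-μ * ((|x - a| : ℝ) : ℂ)) * Φ x with hE0
  set E2 : ℂ := ∫ x : ℝ, Complex.exp (-μ * ((|x - a| : ℝ) : ℂ)) * g2 x with hE2d
  -- key identity from integration by parts
  have hkey := aux_key μ hre Φ a
  have hlin : (∫ x : ℝ, Complex.exp (-μ * ((|x - a| : ℝ) : ℂ)) *
      (g2 x - μ ^ 2 * Φ x)) = E2 - μ ^ 2 * E0 := by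
    have hco : ∀ x : ℝ, Complex.exp (-μ * ((|x - a| : ℝ) : ℂ)) * (g2 x - μ ^ 2 * Φ x)
        = Complex.exp (-μ * ((|x - a| : ℝ) : ℂ)) * g2 x
          - μ ^ 2 * (Complex.exp (-μ * ((|x - a| : ℝ) : ℂ)) * Φ x) := fun x => by ring
    simp only [hco]
    rw [integral_sub I2 (I0.const_mul _), integral_const_mul]
  rw [← hg1, ← hg2, hlin] at hkey
  have hE2 : E2 = μ ^ 2 * E0 - 2 * μ * Φ a := by linear_combination hkey
  -- split the target integral
  have hco2 : ∀ x : ℝ, (starRingEnd ℂ) c * Complex.exp (-μ * ((|x - a| : ℝ) : ℂ))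
      * ((x : ℂ) * ψ x - Complex.I * g2 x)
      = (starRingEnd ℂ) c * (Complex.exp (-μ * ((|x - a| : ℝ) : ℂ)) * Φ x)
        - ((starRingEnd ℂ) c * Complex.I)
          * (Complex.exp (-μ * ((|x - a| : ℝ) : ℂ)) * g2 x) := fun x => by
    have hx : (x : ℂ) * ψ x = Φ x := mul_comm _ _
    rw [hx]; ring
  simp only [hco2]
  rw [integral_sub (I0.const_mul _) (I2.const_mul _), integral_const_mul, integral_const_mul,
    ← hE0, ← hE2d]
  have hΦa : Φ a = (a : ℂ) * ψ a := mul_comm _ _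
  linear_combination (-((starRingEnd ℂ) c * Complex.I)) * hE2
    + (-((starRingEnd ℂ) c * Complex.I * E0)) * hμ2
    + (E0 * (starRingEnd ℂ) c) * Complex.I_sq + Φ a * hcc + hΦa
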